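/- For all integers ℓ ≥ 1 and q ≥ 0 the following holds. Let x = (x_e)_{e ∈ E_{ℓ,q}} and let x' = (x'_e)_{e ∈ E'_{ℓ,q}} agree with x on E_{ℓ,q} and have x'_e = 1 for every new edge e ∈ E'_{ℓ,q}∖E_{ℓ,q}. If x' ∈ ST(G'_{ℓ,q}), then x ∈ SP(G_{ℓ,q}, s, t). -/

import Mathlib

open Finset

namespace TSPGap


/-! ### Lovász–Schrijver lift-and-project operators -/

/-- `cone(R) = {(λ, λx) : λ ≥ 0, x ∈ R}`, with the extra 0th coordinate first. -/
def lsCone {ι : Type*} (R : Set (ι → ℝ)) : Set (ℝ × (ι → ℝ)) :=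
  {p | ∃ c : ℝ, ∃ y ∈ R, 0 ≤ c ∧ p.1 = c ∧ p.2 = fun i => c * y i}

/-- `X` is a protection matrix witnessing `x ∈ N(R)`: it is symmetric, its 0th row and
diagonal both equal `(1, x)`, and each row `X_i` and difference `X_0 - X_i` lies in `cone(R)`. -/
def IsProtection {ι : Type*} (R : Set (ι → ℝ)) (x : ι → ℝ)
    (X : Option ι → Option ι → ℝ) : Prop :=
  (∀ i j, X i j = X j i) ∧
  X none none = 1 ∧
  (∀ i, X none (some i) = x i) ∧
  (∀ i, X (some i) (some i) = x i) ∧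
  (∀ i, (X (some i) none, fun j => X (some i) (some j)) ∈ lsCone R) ∧
  (∀ i, (X none none - X (some i) none,
         fun j => X none (some j) - X (some i) (some j)) ∈ lsCone R)

/-- The Lovász–Schrijver `N` operator. -/
def lsN {ι : Type*} (R : Set (ι → ℝ)) : Set (ι → ℝ) :=
  {x | ∃ X : Option ι → Option ι → ℝ, IsProtection R x X}

/-- The Lovász–Schrijver `N₊` operator (protection matrix additionally PSD). -/
def lsNplus {ι : Type*} [Fintype ι] (R : Set (ι → ℝ)) : Set (ι → ℝ) :=
  {x | ∃ X : Matrix (Option ι) (Option ι) ℝ, X.PosSemidef ∧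
        IsProtection R x (fun i j => X i j)}

/-! ### Directed graphs -/

variable {V : Type*} [DecidableEq V]

/-- The list of (directed) steps of a walk given by its list of vertices. -/
def dSteps (l : List V) : List (V × V) := l.zip l.tail

/-- The steps of a closed walk given by its list of vertices. -/
def cycSteps (l : List V) : List (V × V) := l.zip (l.rotate 1)

/-- `l` is a directed walk from `u` to `v` using edges of `E`. -/
def IsDWalk (E : Finset (V × V)) (u v : V) (l : List V) : Prop :=
  l.head? = some u ∧ l.getLast? = some v ∧ ∀ a ∈ dSteps l, a ∈ E

/-- Total weight of a walk. -/
def dWalkWeight (w : V × V → ℝ) (l : List V) : ℝ := ((dSteps l).map w).sum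

/-- Shortest-path distance from `u` to `v` in the weighted directed graph `(E, w)`. -/
noncomputable def dDist (E : Finset (V × V)) (w : V × V → ℝ) (u v : V) : ℝ :=
  sInf {c | ∃ l : List V, IsDWalk E u v l ∧ dWalkWeight w l = c}

/-- `x(δ⁺(S))`. -/
def outCut (E : Finset (V × V)) (x : ↥E → ℝ) (S : Finset V) : ℝ :=
  ∑ e ∈ E.attach.filter (fun e => e.val.1 ∈ S ∧ e.val.2 ∉ S), x e

/-- `x(δ⁻(S))`. -/
def inCut (E : Finset (V × V)) (x : ↥E → ℝ) (S : Finset V) : ℝ :=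
  ∑ e ∈ E.attach.filter (fun e => e.val.1 ∉ S ∧ e.val.2 ∈ S), x e

/-- `d · x = ∑_e d_e x_e` over the edge set `E`. -/
def dDot (E : Finset (V × V)) (d : V × V → ℝ) (x : ↥E → ℝ) : ℝ :=
  ∑ e ∈ E.attach, d e.val * x e

/-- The balanced asymmetric tour polytope of the directed graph with node set `VS`
and edge set `E`. -/
def ATbal (VS : Finset V) (E : Finset (V × V)) : Set (↥E → ℝ) :=
  {x | (∀ e, 0 ≤ x e ∧ x e ≤ 1) ∧
       (∀ S : Finset V, S ⊆ VS → S.Nonempty → S ≠ VS →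
          1 ≤ outCut E x S ∧ 1 ≤ inCut E x S) ∧
       (∀ v ∈ VS, outCut E x {v} = inCut E x {v})}

/-- Indicator vectors of Hamiltonian cycles (on node set `VS`) among edges `E`. -/
def hamCycleVecs (VS : Finset V) (E : Finset (V × V)) : Set (↥E → ℝ) :=
  {x | ∃ c : List V, 2 ≤ c.length ∧ c.Nodup ∧ c.toFinset = VS ∧
        (∀ a ∈ cycSteps c, a ∈ E) ∧
        ∀ e : ↥E, x e = if e.val ∈ cycSteps c then 1 else 0}

/-- Edge set of the complete directed graph on the node set `VS` (no self-loops). -/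
def dComplete (VS : Finset V) : Finset (V × V) := (VS ×ˢ VS).filter (fun e => e.1 ≠ e.2)

/-- Edge set of the complete directed graph on all of `V` (no self-loops). -/
def dCompleteAll (V : Type*) [Fintype V] [DecidableEq V] : Finset (V × V) :=
  Finset.univ.filter (fun e => e.1 ≠ e.2)

/-- Out-degree of `v` in edge set `E`. -/
def outDeg (E : Finset (V × V)) (v : V) : ℕ := (E.filter (fun e => e.1 = v)).card

/-- In-degree of `v` in edge set `E`. -/
def inDeg (E : Finset (V × V)) (v : V) : ℕ := (E.filter (fun e => e.2 = v)).card

/-- A frame for the edge `e = (u,v)`: a set `F ⊆ E \ {e}` consisting of an edge-simple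
path from `u` to `v` together with zero or more edge-simple cycles, all pairwise
edge-disjoint. -/
def IsFrame (E : Finset (V × V)) (e : V × V) (F : Finset (V × V)) : Prop :=
  F ⊆ E.erase e ∧
  ∃ (p : List V) (cs : List (List V)),
    p.head? = some e.1 ∧ p.getLast? = some e.2 ∧ (∀ a ∈ dSteps p, a ∈ E) ∧
    (∀ c ∈ cs, c ≠ [] ∧ ∀ a ∈ cycSteps c, a ∈ E) ∧
    (dSteps p ++ (cs.map cycSteps).flatten).Nodup ∧
    F = (dSteps p ++ (cs.map cycSteps).flatten).toFinset

/-- There exist two edge-disjoint directed (simple) paths from `u` to `v` in `E`. -/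
def TwoEdgeDisjointPaths (E : Finset (V × V)) (u v : V) : Prop :=
  ∃ p q : List V, p.Nodup ∧ q.Nodup ∧
    p.head? = some u ∧ p.getLast? = some v ∧
    q.head? = some u ∧ q.getLast? = some v ∧
    (∀ a ∈ dSteps p, a ∈ E) ∧ (∀ a ∈ dSteps q, a ∈ E) ∧
    (dSteps p).Disjoint (dSteps q)




/-! ### The Charikar–Goemans–Karloff graphs -/

/-- Vertex type housing the graph `G_{k,r}` (index `k = 0` is a dummy level). -/
def CGKV : ℕ → Type
  | 0 => PUnit
  | 1 => ℕ
  | k + 2 => (ℕ × CGKV (k + 1)) ⊕ Fin 2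

instance CGKV.decEq : (k : ℕ) → DecidableEq (CGKV k)
  | 0 => inferInstanceAs (DecidableEq PUnit)
  | 1 => inferInstanceAs (DecidableEq ℕ)
  | k + 2 =>
      letI : DecidableEq (CGKV (k + 1)) := CGKV.decEq (k + 1)
      inferInstanceAs (DecidableEq ((ℕ × CGKV (k + 1)) ⊕ Fin 2))

/-- The source of `G_{k,r}`. -/
def CGKsrc (r : ℕ) : (k : ℕ) → CGKV k
  | 0 => PUnit.unit
  | 1 => (0 : ℕ)
  | _ + 2 => Sum.inr 0

/-- The sink of `G_{k,r}`. -/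
def CGKsnk (r : ℕ) : (k : ℕ) → CGKV k
  | 0 => PUnit.unit
  | 1 => (r + 1 : ℕ)
  | _ + 2 => Sum.inr 1

/-- The node set of `G_{k,r}`. -/
def CGKVS (r : ℕ) : (k : ℕ) → Finset (CGKV k)
  | 0 => ∅
  | 1 => Finset.range (r + 2)
  | k + 2 =>
      ((Finset.range r) ×ˢ CGKVS r (k + 1)).image Sum.inl ∪ {Sum.inr 0, Sum.inr 1}

/-- The edge set of `G_{k,r}`: at level 1, two oppositely-directed paths of `r+1` edges
on the nodes `0, …, r+1`; at level `k+2`, the edges of the `r` copies of `G_{k+1,r}`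
together with a path from the source `s` through the copies' sources to the sink `t`,
and a path from `t` through the copies' sinks (in the opposite order) back to `s`. -/
def CGKE (r : ℕ) : (k : ℕ) → Finset (CGKV k × CGKV k)
  | 0 => ∅
  | 1 => (dSteps (List.range (r + 2))).toFinset ∪
         (dSteps (List.range (r + 2)).reverse).toFinset
  | k + 2 =>
      (Finset.range r).biUnion
        (fun j => (CGKE r (k + 1)).image (fun e => (Sum.inl (j, e.1), Sum.inl (j, e.2)))) ∪
      (dSteps (Sum.inr 0 ::
        ((List.range r).map (fun j => Sum.inl (j, CGKsrc r (k + 1)))) ++ [Sum.inr 1])).toFinset ∪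
      (dSteps (Sum.inr 1 ::
        (((List.range r).map (fun j => Sum.inl (j, CGKsnk r (k + 1)))).reverse) ++ [Sum.inr 0])).toFinset

/-- Edge weights of `G_{k,r}` (and of `L_{k,r}`): level-`ℓ` edges have weight `r^(ℓ-1)`. -/
def CGKw (r : ℕ) : (k : ℕ) → CGKV k × CGKV k → ℝ
  | 0, _ => 0
  | 1, _ => 1
  | k + 2, e =>
      match e with
      | (Sum.inl (j, u), Sum.inl (j', v)) =>
          if j = j' then CGKw r (k + 1) (u, v) else (r : ℝ) ^ (k + 1)
      | _ => (r : ℝ) ^ (k + 1)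

/-- `v₁`: the successor of `s` on the forward path of `G_{k,r}`. -/
def Lv1 (r : ℕ) : (k : ℕ) → CGKV k
  | 0 => PUnit.unit
  | 1 => (1 : ℕ)
  | k + 2 => Sum.inl (0, CGKsrc r (k + 1))

/-- `v₂`: the predecessor of `t` on the forward path of `G_{k,r}`. -/
def Lv2 (r : ℕ) : (k : ℕ) → CGKV k
  | 0 => PUnit.unit
  | 1 => (r : ℕ)
  | k + 2 => Sum.inl (r - 1, CGKsrc r (k + 1))

/-- `v₃`: the successor of `t` on the backward path of `G_{k,r}`. -/
def Lv3 (r : ℕ) : (k : ℕ) → CGKV k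
  | 0 => PUnit.unit
  | 1 => (r : ℕ)
  | k + 2 => Sum.inl (r - 1, CGKsnk r (k + 1))

/-- `v₄`: the predecessor of `s` on the backward path of `G_{k,r}`. -/
def Lv4 (r : ℕ) : (k : ℕ) → CGKV k
  | 0 => PUnit.unit
  | 1 => (1 : ℕ)
  | k + 2 => Sum.inl (0, CGKsnk r (k + 1))

/-- The node set `V_{k,r}` of `L_{k,r}`: the nodes of `G_{k,r}` minus the two terminals. -/
def LVS (r k : ℕ) : Finset (CGKV k) :=
  ((CGKVS r k).erase (CGKsrc r k)).erase (CGKsnk r k)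

/-- The edge set `E_{k,r}` of `L_{k,r}`: the edges of `G_{k,r}` not incident to a terminal,
plus the two new edges `(v₂,v₁)` and `(v₄,v₃)`. -/
def LE (r k : ℕ) : Finset (CGKV k × CGKV k) :=
  (CGKE r k).filter (fun e =>
    e.1 ≠ CGKsrc r k ∧ e.1 ≠ CGKsnk r k ∧ e.2 ≠ CGKsrc r k ∧ e.2 ≠ CGKsnk r k) ∪
  {(Lv2 r k, Lv1 r k), (Lv4 r k, Lv3 r k)}



/-! ### Undirected graphs -/

variable {V : Type*} [DecidableEq V]

/-- The (undirected) steps of a walk given by its list of vertices. -/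
def uSteps (l : List V) : List (Sym2 V) := (l.zip l.tail).map (fun p => Sym2.mk p.1 p.2)

/-- `l` is a walk from `u` to `v` in the undirected edge set `E`. -/
def IsUWalk (E : Finset (Sym2 V)) (u v : V) (l : List V) : Prop :=
  l.head? = some u ∧ l.getLast? = some v ∧ ∀ e ∈ uSteps l, e ∈ E

/-- Whether the undirected edge `e` crosses the cut `(S, S̄)`. -/
def uCrosses (S : Finset V) (e : Sym2 V) : Bool :=
  Sym2.lift ⟨fun a b => xor (decide (a ∈ S)) (decide (b ∈ S)),
    fun a b => Bool.xor_comm _ _⟩ e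

/-- `x(δ(S))`. -/
def uCut (E : Finset (Sym2 V)) (x : ↥E → ℝ) (S : Finset V) : ℝ :=
  ∑ e ∈ E.attach.filter (fun e => uCrosses S e.val), x e

/-- `d · x = ∑_e d_e x_e` over the undirected edge set `E`. -/
def uDot (E : Finset (Sym2 V)) (d : Sym2 V → ℝ) (x : ↥E → ℝ) : ℝ :=
  ∑ e ∈ E.attach, d e.val * x e

/-- The symmetric tour polytope of the undirected graph with node set `VS`, edges `E`. -/
def STpoly (VS : Finset V) (E : Finset (Sym2 V)) : Set (↥E → ℝ) :=
  {x | (∀ e, 0 ≤ x e ∧ x e ≤ 1) ∧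
       (∀ S : Finset V, S ⊆ VS → S.Nonempty → S ≠ VS → 2 ≤ uCut E x S) ∧
       (∀ v ∈ VS, uCut E x {v} = 2)}

/-- The symmetric path polytope of the undirected graph with node set `VS`, edges `E`,
and endpoints `s`, `t`. -/
def SPpoly (VS : Finset V) (E : Finset (Sym2 V)) (s t : V) : Set (↥E → ℝ) :=
  {x | (∀ e, 0 ≤ x e ∧ x e ≤ 1) ∧
       (∀ S : Finset V, S ⊆ VS → S.Nonempty → S ≠ VS →
          (((s ∈ S) ↔ (t ∈ S)) → 2 ≤ uCut E x S) ∧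
          (¬((s ∈ S) ↔ (t ∈ S)) → 1 ≤ uCut E x S)) ∧
       (∀ v ∈ VS, v ≠ s → v ≠ t → uCut E x {v} = 2) ∧
       uCut E x {s} = 1 ∧ uCut E x {t} = 1}

/-- Indicator vectors of Hamiltonian paths from `s` to `t` (on node set `VS`) among
edges `E`. -/
def uHamPathVecs (VS : Finset V) (E : Finset (Sym2 V)) (s t : V) : Set (↥E → ℝ) :=
  {x | ∃ p : List V, p.Nodup ∧ p.toFinset = VS ∧
        p.head? = some s ∧ p.getLast? = some t ∧
        (∀ e ∈ uSteps p, e ∈ E) ∧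
        ∀ e : ↥E, x e = if e.val ∈ uSteps p then 1 else 0}

/-- Edge set of the complete undirected graph on all of `V` (no self-loops). -/
def uCompleteAll (V : Type*) [Fintype V] [DecidableEq V] : Finset (Sym2 V) :=
  Finset.univ.filter (fun e => ¬ e.IsDiag)

/-- Shortest-path distance (number of edges) between the endpoints of `e`, in the
unweighted undirected graph with edge set `E`. -/
noncomputable def uDist (E : Finset (Sym2 V)) (e : Sym2 V) : ℝ :=
  sInf {c | ∃ u v : V, e = s(u, v) ∧
    ∃ l : List V, IsUWalk E u v l ∧ ((uSteps l).length : ℝ) = c}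

/-! ### Cheung's graphs -/

/-- The node set `V_{ℓ,q}` of Cheung's graph `G_{ℓ,q}`: a top path and a bottom path of
`ℓ+1` nodes each, a left and a right clique of `3q+3` nodes each, and nodes `s`, `t`. -/
inductive ChV (l q : ℕ) where
  | top : Fin (l + 1) → ChV l q
  | bot : Fin (l + 1) → ChV l q
  | left : Fin (3 * q + 3) → ChV l q
  | right : Fin (3 * q + 3) → ChV l q
  | vs : ChV l q
  | vt : ChV l q
deriving DecidableEq, Fintype

/-- The edges of the two paths of `G_{ℓ,q}`. -/
def ChEpaths (l q : ℕ) : Finset (Sym2 (ChV l q)) :=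
  (Finset.univ : Finset (Fin l)).image
    (fun i => s(ChV.top i.castSucc, ChV.top i.succ)) ∪
  (Finset.univ : Finset (Fin l)).image
    (fun i => s(ChV.bot i.castSucc, ChV.bot i.succ))

/-- The edges within the two cliques of `G_{ℓ,q}`. -/
def ChEcliques (l q : ℕ) : Finset (Sym2 (ChV l q)) :=
  ((Finset.univ : Finset (Fin (3 * q + 3) × Fin (3 * q + 3))).filter
      (fun p => p.1 ≠ p.2)).image (fun p => s(ChV.left p.1, ChV.left p.2)) ∪
  ((Finset.univ : Finset (Fin (3 * q + 3) × Fin (3 * q + 3))).filter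
      (fun p => p.1 ≠ p.2)).image (fun p => s(ChV.right p.1, ChV.right p.2))

/-- The connection edges of `G_{ℓ,q}`: path endpoints to the cliques, `s` to the left
clique, and `t` to the right clique. -/
def ChEconn (l q : ℕ) : Finset (Sym2 (ChV l q)) :=
  (Finset.univ : Finset (Fin (3 * q + 3))).image (fun i => s(ChV.top 0, ChV.left i)) ∪
  (Finset.univ : Finset (Fin (3 * q + 3))).image (fun i => s(ChV.bot 0, ChV.left i)) ∪
  (Finset.univ : Finset (Fin (3 * q + 3))).image
    (fun i => s(ChV.top (Fin.last l), ChV.right i)) ∪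
  (Finset.univ : Finset (Fin (3 * q + 3))).image
    (fun i => s(ChV.bot (Fin.last l), ChV.right i)) ∪
  (Finset.univ : Finset (Fin (3 * q + 3))).image (fun i => s(ChV.vs, ChV.left i)) ∪
  (Finset.univ : Finset (Fin (3 * q + 3))).image (fun i => s(ChV.vt, ChV.right i))

/-- The edge set `E_{ℓ,q}` of Cheung's graph `G_{ℓ,q}`. -/
def ChE (l q : ℕ) : Finset (Sym2 (ChV l q)) :=
  ChEpaths l q ∪ ChEcliques l q ∪ ChEconn l q

/-- The node set of `G'_{ℓ,q}`: `G_{ℓ,q}` plus `ℓ-1` new internal path nodes. -/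
inductive ChV' (l q : ℕ) where
  | old : ChV l q → ChV' l q
  | mid : Fin (l - 1) → ChV' l q
deriving DecidableEq, Fintype

/-- The new `s`–`t` path of `G'_{ℓ,q}` (as a list of nodes; it has `ℓ` edges). -/
def ChPathList (l q : ℕ) : List (ChV' l q) :=
  ChV'.old ChV.vs :: ((List.finRange (l - 1)).map ChV'.mid ++ [ChV'.old ChV.vt])

/-- The edge set `E'_{ℓ,q}` of `G'_{ℓ,q}`: the (old) edges of `G_{ℓ,q}` together with the
`ℓ` new edges of a path from `s` to `t` through `ℓ-1` new nodes. -/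
def ChE' (l q : ℕ) : Finset (Sym2 (ChV' l q)) :=
  (ChE l q).image (Sym2.map ChV'.old) ∪ (uSteps (ChPathList l q)).toFinset


section Aux
variable {W : Type*} [DecidableEq W]

lemma uCrosses_mk (S : Finset W) (u w : W) :
    uCrosses S s(u, w) = (xor (decide (u ∈ S)) (decide (w ∈ S))) := rfl

lemma uCrosses_iff (S : Finset W) (u w : W) :
    uCrosses S s(u, w) = true ↔ ¬((u ∈ S) ↔ (w ∈ S)) := by
  rw [uCrosses_mk]
  by_cases hu : u ∈ S <;> by_cases hw : w ∈ S <;> simp [hu, hw]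

lemma uCrosses_false (S : Finset W) (u w : W) (hu : u ∉ S) (hw : w ∉ S) :
    ¬ uCrosses S s(u, w) = true := by
  rw [uCrosses_iff]; tauto

lemma uSteps_endpoints {z : List W} {e : Sym2 W} (he : e ∈ uSteps z) :
    ∃ u w, e = s(u, w) ∧ u ∈ z ∧ w ∈ z := by
  unfold uSteps at he
  rw [List.mem_map] at he
  obtain ⟨⟨u, w⟩, hm, rfl⟩ := he
  exact ⟨u, w, rfl, (List.of_mem_zip hm).1, List.mem_of_mem_tail (List.of_mem_zip hm).2⟩

lemma uSteps_cons_cons (a c : W) (z : List W) :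
    uSteps (a :: c :: z) = s(a, c) :: uSteps (c :: z) := rfl

lemma filt_none (T : Finset W) (z : List W) (hz : ∀ v ∈ z, v ∉ T) :
    (uSteps z).filter (fun e => uCrosses T e) = [] := by
  rw [List.filter_eq_nil_iff]
  intro e he
  obtain ⟨u, w, rfl, hu, hw⟩ := uSteps_endpoints he
  exact uCrosses_false T u w (hz u hu) (hz w hw)

lemma filt_first (T : Finset W) (a b : W) (ms : List W)
    (ha : a ∈ T) (h2 : ∀ v ∈ ms ++ [b], v ∉ T) :
    (uSteps (a :: (ms ++ [b]))).filter (fun e => uCrosses T e)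
      = [s(a, (ms ++ [b]).head (by simp))] := by
  cases ms with
  | nil =>
      have h1 : uSteps (a :: ([] ++ [b])) = [s(a, b)] := rfl
      rw [h1]
      have hc : uCrosses T s(a, b) = true := by
        rw [uCrosses_iff]
        have := h2 b (by simp)
        tauto
      simp [List.filter, hc]
  | cons c ms' =>
      have h1 : a :: (c :: ms' ++ [b]) = a :: c :: (ms' ++ [b]) := by simp
      rw [h1, uSteps_cons_cons]
      have hc : uCrosses T s(a, c) = true := by
        rw [uCrosses_iff]
        have := h2 c (by simp)
        tauto
      rw [List.filter_cons_of_pos hc]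
      rw [filt_none T (c :: (ms' ++ [b])) (by
        intro v hv
        exact h2 v (by simpa using hv))]
      simp

lemma filt_last (T : Finset W) (b : W) (ms : List W) :
    ∀ a, a ∉ T → (∀ v ∈ ms, v ∉ T) → b ∈ T →
    (uSteps (a :: (ms ++ [b]))).filter (fun e => uCrosses T e)
      = [s((a :: ms).getLast (by simp), b)] := by
  induction ms with
  | nil =>
      intro a ha _ hb
      have h1 : uSteps (a :: ([] ++ [b])) = [s(a, b)] := rfl
      rw [h1]
      have hc : uCrosses T s(a, b) = true := by rw [uCrosses_iff]; tauto
      simp [List.filter, hc]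
  | cons c ms' ih =>
      intro a ha hms hb
      have h1 : a :: (c :: ms' ++ [b]) = a :: c :: (ms' ++ [b]) := by simp
      rw [h1, uSteps_cons_cons]
      have hc : ¬ uCrosses T s(a, c) = true :=
        uCrosses_false T a c ha (hms c (by simp))
      rw [List.filter_cons_of_neg hc]
      rw [ih c (hms c (by simp)) (fun v hv => hms v (by simp [hv])) hb]
      congr 2

lemma uCut_eq_sum (E : Finset (Sym2 W)) (x : ↥E → ℝ)
    (Y : Sym2 W → ℝ) (hY : ∀ e : ↥E, Y e.val = x e) (S : Finset W) :
    uCut E x S = ∑ e ∈ E.filter (fun e => uCrosses S e), Y e := by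
  unfold uCut
  rw [Finset.sum_filter, Finset.sum_filter,
    ← Finset.sum_attach E (fun e => if uCrosses S e then Y e else 0)]
  exact Finset.sum_congr rfl fun e _ => by rw [hY]

lemma uCrosses_image {V₁ : Type*} [DecidableEq V₁] (f : W → V₁) [DecidableEq V₁]
    (hf : Function.Injective f) (S : Finset W) (e : Sym2 W) :
    uCrosses (S.image f) (Sym2.map f e) = uCrosses S e := by
  induction e using Sym2.ind with
  | _ u w =>
    rw [Sym2.map_pair_eq, uCrosses_mk, uCrosses_mk]
    have h1 : decide (f u ∈ S.image f) = decide (u ∈ S) :=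
      decide_eq_decide.mpr (by simp [Finset.mem_image, hf.eq_iff])
    have h2 : decide (f w ∈ S.image f) = decide (w ∈ S) :=
      decide_eq_decide.mpr (by simp [Finset.mem_image, hf.eq_iff])
    rw [h1, h2]

lemma uCut_compl [Fintype W] (E : Finset (Sym2 W)) (x : ↥E → ℝ) (S : Finset W) :
    uCut E x (univ \ S) = uCut E x S := by
  unfold uCut
  congr 1
  apply Finset.filter_congr
  intro e _
  induction e.val using Sym2.ind with
  | _ u w =>
    by_cases hu : u ∈ S <;> by_cases hw : w ∈ S <;>
      simp [uCrosses_mk, Finset.mem_sdiff, hu, hw]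

end Aux

lemma ChE_no_terminal (l q : ℕ) (u w : ChV l q)
    (hu : u = ChV.vs ∨ u = ChV.vt) (hw : w = ChV.vs ∨ w = ChV.vt) :
    s(u, w) ∉ ChE l q := by
  rcases hu with rfl | rfl <;> rcases hw with rfl | rfl <;>
    simp [ChE, ChEpaths, ChEcliques, ChEconn, Sym2.eq_iff]

lemma mem_ChPathList {l q : ℕ} {v : ChV' l q} (hv : v ∈ ChPathList l q) :
    v = ChV'.old ChV.vs ∨ v = ChV'.old ChV.vt ∨ ∃ j, v = ChV'.mid j := by
  simp only [ChPathList, List.mem_cons, List.mem_append, List.mem_map,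
    List.mem_singleton] at hv
  rcases hv with rfl | ⟨j, _, rfl⟩ | rfl | h
  · exact Or.inl rfl
  · exact Or.inr (Or.inr ⟨j, rfl⟩)
  · exact Or.inr (Or.inl rfl)
  · simp at h

theorem stmt13 (l q : ℕ) (hl : 1 ≤ l)
    (x : ↥(ChE l q) → ℝ) (x' : ↥(ChE' l q) → ℝ)
    (hagree : ∀ (e : ↥(ChE l q)) (e' : ↥(ChE' l q)),
      e'.val = Sym2.map ChV'.old e.val → x' e' = x e)
    (hnew : ∀ e' : ↥(ChE' l q),
      e'.val ∉ (ChE l q).image (Sym2.map ChV'.old) → x' e' = 1)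
    (hx' : x' ∈ STpoly Finset.univ (ChE' l q)) :
    x ∈ SPpoly Finset.univ (ChE l q) ChV.vs ChV.vt := by
  classical
  obtain ⟨hb', hcut', hdeg'⟩ := hx'
  have hoinj : Function.Injective (ChV'.old : ChV l q → ChV' l q) := fun a b h => by
    injection h
  have hminj : Function.Injective (Sym2.map (ChV'.old : ChV l q → ChV' l q)) :=
    Sym2.map.injective hoinj
  set A : Finset (Sym2 (ChV' l q)) := (ChE l q).image (Sym2.map ChV'.old) with hAdef
  set B : Finset (Sym2 (ChV' l q)) := (uSteps (ChPathList l q)).toFinset with hBdef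
  have hChE' : ChE' l q = A ∪ B := rfl
  have hA_sub : A ⊆ ChE' l q := hChE' ▸ Finset.subset_union_left
  have hB_sub : B ⊆ ChE' l q := hChE' ▸ Finset.subset_union_right
  set Y' : Sym2 (ChV' l q) → ℝ :=
    fun e => if h : e ∈ ChE' l q then x' ⟨e, h⟩ else 0 with hY'def
  set Yx : Sym2 (ChV l q) → ℝ :=
    fun e => if h : e ∈ ChE l q then x ⟨e, h⟩ else 0 with hYxdef
  have hY' : ∀ e : ↥(ChE' l q), Y' e.val = x' e := fun e => by
    rw [hY'def]; simp only [e.prop, dif_pos]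
  have hYx : ∀ e : ↥(ChE l q), Yx e.val = x e := fun e => by
    rw [hYxdef]; simp only [e.prop, dif_pos]
  have hAmem : ∀ {e}, e ∈ A → ∃ a b, e = s(ChV'.old a, ChV'.old b) ∧ s(a, b) ∈ ChE l q := by
    intro e he
    rw [hAdef, Finset.mem_image] at he
    obtain ⟨e', he', rfl⟩ := he
    induction e' using Sym2.ind with
    | _ a b => exact ⟨a, b, (Sym2.map_pair_eq _ _ _), he'⟩
  have hA_not_mid : ∀ (u : ChV' l q) (j : Fin (l - 1)), s(u, ChV'.mid j) ∉ A := by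
    intro u j h
    obtain ⟨a, b, heq, _⟩ := hAmem h
    rw [Sym2.eq_iff] at heq
    rcases heq with ⟨_, h2⟩ | ⟨_, h2⟩ <;> simp at h2
  have hA_vsvt : s(ChV'.old ChV.vs, ChV'.old ChV.vt) ∉ A := by
    intro h
    obtain ⟨a, b, heq, hmem⟩ := hAmem h
    rw [Sym2.eq_iff] at heq
    simp only [ChV'.old.injEq] at heq
    rcases heq with ⟨h1, h2⟩ | ⟨h1, h2⟩
    · exact ChE_no_terminal l q a b (Or.inl h1.symm) (Or.inr h2.symm) hmem
    · exact ChE_no_terminal l q a b (Or.inr h2.symm) (Or.inl h1.symm) hmem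
  have himg : ∀ (S : Finset (ChV l q)) (u : ChV l q),
      ChV'.old u ∈ S.image ChV'.old ↔ u ∈ S := by
    intro S u
    simp [Finset.mem_image]
  have hmid : ∀ (S : Finset (ChV l q)) (j : Fin (l - 1)),
      ChV'.mid j ∉ S.image ChV'.old := by
    intro S j h
    rw [Finset.mem_image] at h
    obtain ⟨a, _, h⟩ := h
    simp at h
  have himg_ne : ∀ (S : Finset (ChV l q)) (w : ChV l q), w ∉ S →
      S.image ChV'.old ≠ univ := by
    intro S w hw h
    have hmem : ChV'.old w ∈ S.image ChV'.old := h ▸ Finset.mem_univ _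
    exact hw ((himg S w).1 hmem)
  have disjAB : Disjoint A B := by
    rw [Finset.disjoint_left]
    intro e heA heB
    obtain ⟨a, b, rfl, hmem⟩ := hAmem heA
    rw [hBdef, List.mem_toFinset] at heB
    obtain ⟨u, w, heq, hu, hw⟩ := uSteps_endpoints heB
    have hterm : ∀ c : ChV l q, ChV'.old c ∈ ChPathList l q →
        c = ChV.vs ∨ c = ChV.vt := by
      intro c hc
      rcases mem_ChPathList hc with h | h | ⟨j, h⟩
      · exact Or.inl (hoinj h)
      · exact Or.inr (hoinj h)
      · simp at h
    rw [Sym2.eq_iff] at heq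
    rcases heq with ⟨h1, h2⟩ | ⟨h1, h2⟩
    · subst h1; subst h2
      exact ChE_no_terminal l q a b (hterm a hu) (hterm b hw) hmem
    · subst h1; subst h2
      exact ChE_no_terminal l q a b (hterm a hw) (hterm b hu) hmem
  have split : ∀ S : Finset (ChV l q),
      uCut (ChE' l q) x' (S.image ChV'.old) =
        uCut (ChE l q) x S +
        ∑ e ∈ ((uSteps (ChPathList l q)).filter
            (fun e => uCrosses (S.image ChV'.old) e)).toFinset, Y' e := by
    intro S
    rw [uCut_eq_sum _ x' Y' hY', hChE', Finset.filter_union,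
      Finset.sum_union (Finset.disjoint_filter_filter disjAB)]
    congr 1
    · rw [uCut_eq_sum _ x Yx hYx]
      have himgfilt : A.filter (fun e => uCrosses (S.image ChV'.old) e)
          = ((ChE l q).filter (fun e => uCrosses S e)).image (Sym2.map ChV'.old) := by
        ext e
        simp only [hAdef, Finset.mem_filter, Finset.mem_image]
        constructor
        · rintro ⟨⟨e', he', rfl⟩, hc⟩
          exact ⟨e', ⟨he', by rwa [uCrosses_image _ hoinj] at hc⟩, rfl⟩
        · rintro ⟨e', ⟨he', hc⟩, rfl⟩
          exact ⟨⟨e', he', rfl⟩, by rwa [uCrosses_image _ hoinj]⟩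
      rw [himgfilt, Finset.sum_image (fun a _ b _ h => hminj h)]
      refine Finset.sum_congr rfl fun e he => ?_
      rw [Finset.mem_filter] at he
      have hmem' : Sym2.map ChV'.old e ∈ ChE' l q :=
        hA_sub (by rw [hAdef]; exact Finset.mem_image_of_mem _ he.1)
      rw [hY'def, hYxdef]
      simp only [dif_pos hmem', dif_pos he.1]
      exact hagree ⟨e, he.1⟩ ⟨_, hmem'⟩ rfl
    · congr 1
      ext e
      simp [hBdef, List.mem_filter]
  have hpath : ChPathList l q =
      ChV'.old ChV.vs :: (((List.finRange (l - 1)).map ChV'.mid)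
        ++ [ChV'.old ChV.vt]) := rfl
  have key0 : ∀ S : Finset (ChV l q), ChV.vs ∉ S → ChV.vt ∉ S →
      uCut (ChE' l q) x' (S.image ChV'.old) = uCut (ChE l q) x S := by
    intro S hvs hvt
    rw [split S, filt_none (S.image ChV'.old) (ChPathList l q) ?_]
    · simp
    · intro v hv
      rcases mem_ChPathList hv with rfl | rfl | ⟨j, rfl⟩
      · intro h; exact hvs ((himg S _).1 h)
      · intro h; exact hvt ((himg S _).1 h)
      · exact hmid S j
  have key1 : ∀ S : Finset (ChV l q), ChV.vs ∈ S → ChV.vt ∉ S →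
      uCut (ChE' l q) x' (S.image ChV'.old) = uCut (ChE l q) x S + 1 := by
    intro S hvs hvt
    have hmsb : ∀ v ∈ ((List.finRange (l - 1)).map ChV'.mid) ++ [ChV'.old ChV.vt],
        v ∉ S.image ChV'.old := by
      intro v hv
      rw [List.mem_append] at hv
      rcases hv with hv | hv
      · obtain ⟨j, _, rfl⟩ := List.mem_map.1 hv
        exact hmid S j
      · rw [List.mem_singleton] at hv
        subst hv
        intro h; exact hvt ((himg S _).1 h)
    have hfe := filt_first (S.image ChV'.old) (ChV'.old ChV.vs) (ChV'.old ChV.vt)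
      ((List.finRange (l - 1)).map ChV'.mid) ((himg S _).2 hvs) hmsb
    rw [split S, hpath, hfe]
    congr 1
    have hh0 : ((((List.finRange (l - 1)).map ChV'.mid) ++ [ChV'.old ChV.vt] :
          List (ChV' l q))).head (by simp)
        ∈ (((List.finRange (l - 1)).map ChV'.mid) ++ [ChV'.old ChV.vt] :
          List (ChV' l q)) := List.head_mem _
    set h0 : ChV' l q :=
      ((((List.finRange (l - 1)).map ChV'.mid) ++ [ChV'.old ChV.vt] :
        List (ChV' l q))).head (by simp)
    have heB : s(ChV'.old ChV.vs, h0) ∈ ChE' l q := by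
      apply hB_sub
      rw [hBdef, List.mem_toFinset, hpath]
      refine List.mem_of_mem_filter (p := fun e => uCrosses (S.image ChV'.old) e) ?_
      rw [hfe]
      exact List.mem_singleton_self _
    have heA : s(ChV'.old ChV.vs, h0) ∉ A := by
      rcases List.mem_append.1 hh0 with h | h
      · obtain ⟨j, _, hj⟩ := List.mem_map.1 h
        rw [← hj]
        exact hA_not_mid _ j
      · rw [List.mem_singleton] at h
        rw [h]
        exact hA_vsvt
    have hYe : Y' s(ChV'.old ChV.vs, h0) = 1 := by
      rw [hY'def]
      simp only [dif_pos heB]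
      exact hnew ⟨_, heB⟩ heA
    simp [hYe]
  have key2 : uCut (ChE' l q) x' (({ChV.vt} : Finset (ChV l q)).image ChV'.old)
      = uCut (ChE l q) x {ChV.vt} + 1 := by
    have h1 : ChV'.old ChV.vs ∉ ({ChV.vt} : Finset (ChV l q)).image ChV'.old := by
      intro h
      have := (himg _ _).1 h
      simp at this
    have h2 : ∀ v ∈ (List.finRange (l - 1)).map ChV'.mid,
        v ∉ ({ChV.vt} : Finset (ChV l q)).image ChV'.old := by
      intro v hv
      obtain ⟨j, _, rfl⟩ := List.mem_map.1 hv
      exact hmid _ j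
    have h3 : ChV'.old ChV.vt ∈ ({ChV.vt} : Finset (ChV l q)).image ChV'.old :=
      (himg _ _).2 (Finset.mem_singleton_self _)
    have hfe := filt_last (({ChV.vt} : Finset (ChV l q)).image ChV'.old)
      (ChV'.old ChV.vt) ((List.finRange (l - 1)).map ChV'.mid)
      (ChV'.old ChV.vs) h1 h2 h3
    rw [split _, hpath, hfe]
    congr 1
    have hg : ((ChV'.old ChV.vs :: (List.finRange (l - 1)).map ChV'.mid :
          List (ChV' l q))).getLast (by simp)
        ∈ (ChV'.old ChV.vs :: (List.finRange (l - 1)).map ChV'.mid :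
          List (ChV' l q)) := List.getLast_mem _
    set g : ChV' l q :=
      ((ChV'.old ChV.vs :: (List.finRange (l - 1)).map ChV'.mid :
        List (ChV' l q))).getLast (by simp)
    have heB : s(g, ChV'.old ChV.vt) ∈ ChE' l q := by
      apply hB_sub
      rw [hBdef, List.mem_toFinset, hpath]
      refine List.mem_of_mem_filter
        (p := fun e => uCrosses (({ChV.vt} : Finset (ChV l q)).image ChV'.old) e) ?_
      rw [hfe]
      exact List.mem_singleton_self _
    have heA : s(g, ChV'.old ChV.vt) ∉ A := by
      rcases List.mem_cons.1 hg with h | h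
      · rw [h]
        exact hA_vsvt
      · obtain ⟨j, _, hj⟩ := List.mem_map.1 h
        rw [← hj, Sym2.eq_swap]
        exact hA_not_mid _ j
    have hYe : Y' s(g, ChV'.old ChV.vt) = 1 := by
      rw [hY'def]
      simp only [dif_pos heB]
      exact hnew ⟨_, heB⟩ heA
    simp [hYe]
  refine ⟨?_, ?_, ?_, ?_, ?_⟩
  · intro e
    have hm : Sym2.map ChV'.old e.val ∈ ChE' l q :=
      hA_sub (by rw [hAdef]; exact Finset.mem_image_of_mem _ e.prop)
    rw [← hagree e ⟨_, hm⟩ rfl]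
    exact hb' _
  · intro S hSsub hSne hSuniv
    have hex : ∃ v, v ∉ S := by
      by_contra h
      push_neg at h
      exact hSuniv (Finset.eq_univ_iff_forall.2 h)
    obtain ⟨v₀, hv₀⟩ := hex
    obtain ⟨w₀, hw₀⟩ := hSne
    constructor
    · intro hiff
      by_cases hvs : ChV.vs ∈ S
      · have hvt : ChV.vt ∈ S := hiff.1 hvs
        have h1 : uCut (ChE l q) x S = uCut (ChE l q) x (univ \ S) :=
          (uCut_compl _ _ _).symm
        have h2 := key0 (univ \ S) (by simp [hvs]) (by simp [hvt])
        have h3 := hcut' ((univ \ S).image ChV'.old) (Finset.subset_univ _)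
          ⟨ChV'.old v₀, Finset.mem_image_of_mem _ (by simp [hv₀])⟩
          (himg_ne _ w₀ (by simp [hw₀]))
        linarith
      · have hvt : ChV.vt ∉ S := fun h => hvs (hiff.2 h)
        have h2 := key0 S hvs hvt
        have h3 := hcut' (S.image ChV'.old) (Finset.subset_univ _)
          (Finset.Nonempty.image ⟨w₀, hw₀⟩ ChV'.old) (himg_ne _ v₀ hv₀)
        linarith
    · intro hniff
      by_cases hvs : ChV.vs ∈ S
      · have hvt : ChV.vt ∉ S := fun h => hniff ⟨fun _ => h, fun _ => hvs⟩
        have h2 := key1 S hvs hvt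
        have h3 := hcut' (S.image ChV'.old) (Finset.subset_univ _)
          (Finset.Nonempty.image ⟨w₀, hw₀⟩ ChV'.old) (himg_ne _ v₀ hv₀)
        linarith
      · have hvt : ChV.vt ∈ S := by
          by_contra h
          exact hniff ⟨fun hh => absurd hh hvs, fun hh => absurd hh h⟩
        have h1 : uCut (ChE l q) x S = uCut (ChE l q) x (univ \ S) :=
          (uCut_compl _ _ _).symm
        have h2 := key1 (univ \ S) (by simp [hvs]) (by simp [hvt])
        have h3 := hcut' ((univ \ S).image ChV'.old) (Finset.subset_univ _)
          ⟨ChV'.old ChV.vs, Finset.mem_image_of_mem _ (by simp [hvs])⟩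
          (himg_ne _ w₀ (by simp [hw₀]))
        linarith
  · intro v _ hvs hvt
    have h2 := key0 {v} (by simp only [Finset.mem_singleton]; exact fun h => hvs h.symm)
      (by simp only [Finset.mem_singleton]; exact fun h => hvt h.symm)
    have h3 := hdeg' (ChV'.old v) (Finset.mem_univ _)
    rw [Finset.image_singleton] at h2
    rw [← h2]
    exact h3
  · have h2 := key1 {ChV.vs} (Finset.mem_singleton_self _) (by simp)
    rw [Finset.image_singleton] at h2
    have h3 := hdeg' (ChV'.old ChV.vs) (Finset.mem_univ _)
    linarith
  · have h2 := key2
    rw [Finset.image_singleton] at h2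
    have h3 := hdeg' (ChV'.old ChV.vt) (Finset.mem_univ _)
    linarith

end TSPGap
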